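/- For m a positive integer and probabilities p_0,...,p_m summing to 1, define p(u,v) = p_u * p_{m-v} if u+v ≠ m, and p(u,v) = p_u^2 - p_u if u+v = m. Then for any g, h with 0 ≤ g, h ≤ m and g+h < m, the sum W(g,h) = Σ_{u=0}^{g} Σ_{v=0}^{h} p(u,v) equals Q_g * (1 - Q_{m-h-1}), where Q_u = p_0 + ... + p_u; in particular W(g,h) ≥ 0. -/
import Mathlib


open Finset

theorem stmt0 (m : ℕ) (hm : 1 ≤ m) (p : ℕ → ℝ) (hp : ∀ u, 0 ≤ p u)
    (hsum : ∑ u ∈ Finset.range (m + 1), p u = 1)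
    (g h : ℕ) (hg : g ≤ m) (hh : h ≤ m) (hgh : g + h < m) :
    (∑ u ∈ Finset.range (g + 1), ∑ v ∈ Finset.range (h + 1),
        (if u + v = m then p u ^ 2 - p u else p u * p (m - v)))
      = (∑ t ∈ Finset.range (g + 1), p t) * (1 - ∑ t ∈ Finset.range (m - h), p t) ∧
    0 ≤ ∑ u ∈ Finset.range (g + 1), ∑ v ∈ Finset.range (h + 1),
        (if u + v = m then p u ^ 2 - p u else p u * p (m - v)) := by
  have key : (∑ u ∈ Finset.range (g + 1), ∑ v ∈ Finset.range (h + 1),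
        (if u + v = m then p u ^ 2 - p u else p u * p (m - v)))
      = (∑ t ∈ Finset.range (g + 1), p t) * (1 - ∑ t ∈ Finset.range (m - h), p t) := by
    have h1 : ∀ u ∈ Finset.range (g + 1), ∀ v ∈ Finset.range (h + 1),
        (if u + v = m then p u ^ 2 - p u else p u * p (m - v)) = p u * p (m - v) := by
      intro u hu v hv
      rw [Finset.mem_range] at hu hv
      have : u + v ≠ m := by omega
      simp [this]
    calc (∑ u ∈ Finset.range (g + 1), ∑ v ∈ Finset.range (h + 1),
        (if u + v = m then p u ^ 2 - p u else p u * p (m - v)))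
        = ∑ u ∈ Finset.range (g + 1), ∑ v ∈ Finset.range (h + 1), p u * p (m - v) := by
          apply Finset.sum_congr rfl
          intro u hu
          exact Finset.sum_congr rfl (h1 u hu)
      _ = (∑ t ∈ Finset.range (g + 1), p t) * (∑ v ∈ Finset.range (h + 1), p (m - v)) := by
          rw [Finset.sum_mul]
          apply Finset.sum_congr rfl
          intro u _
          rw [Finset.mul_sum]
      _ = (∑ t ∈ Finset.range (g + 1), p t) * (1 - ∑ t ∈ Finset.range (m - h), p t) := by
          congr 1
          have hrefl : ∑ v ∈ Finset.range (h + 1), p (m - v)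
              = ∑ j ∈ Finset.range (h + 1), p (m - h + j) := by
            rw [← Finset.sum_range_reflect]
            apply Finset.sum_congr rfl
            intro j hj
            rw [Finset.mem_range] at hj
            congr 1
            omega
          have hico : ∑ t ∈ Finset.Ico (m - h) (m + 1), p t
              = ∑ j ∈ Finset.range (h + 1), p (m - h + j) := by
            rw [Finset.sum_Ico_eq_sum_range]
            have : m + 1 - (m - h) = h + 1 := by omega
            rw [this]
          have hsub : ∑ t ∈ Finset.Ico (m - h) (m + 1), p t
              = (∑ t ∈ Finset.range (m + 1), p t) - ∑ t ∈ Finset.range (m - h), p t := by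
            have := Finset.sum_range_add_sum_Ico p (show m - h ≤ m + 1 by omega)
            linarith
          rw [hrefl, ← hico, hsub, hsum]
  refine ⟨key, ?_⟩
  rw [key]
  apply mul_nonneg
  · exact Finset.sum_nonneg fun t _ => hp t
  · have : ∑ t ∈ Finset.range (m - h), p t ≤ ∑ t ∈ Finset.range (m + 1), p t := by
      apply Finset.sum_le_sum_of_subset_of_nonneg
      · exact Finset.range_subset_range.mpr (by omega)
      · intro t _ _; exact hp t
    linarith [this, hsum]
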